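/- Let 0 < a < 1, n ≥ 1, and consider the 2n nodes x_{±k} = ±√(((1-a^2)/2)cos((2k-1)π/(2n)) + (1+a^2)/2), k = 1,…,n, on E(a) = [-1,-a] ∪ [a,1], with nodal polynomial ω_{2n}(x) = ∏_{1≤|k|≤n}(x - x_k). Then the Lebesgue constant satisfies λ_{2n}(ω_{2n}, E(a)) = sup_{x∈E(a)} ∑_{1≤|k|≤n} |ω_{2n}(x)/(ω_{2n}'(x_k)(x - x_k))| ≤ (1/a)·Λ_n + (1-a^2)/(8a^2), where Λ_n is the Lebesgue constant of Lagrange interpolation at the n Chebyshev nodes cos((2k-1)π/(2n)) on [-1,1]. -/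

import Mathlib

open Polynomial Real

lemma cheb_deg17 : ∀ m : ℕ, ((Chebyshev.T ℝ (m+1)).natDegree = m+1 ∧
    (Chebyshev.T ℝ (m+1)).leadingCoeff = 2^m) := by
  have key : ∀ m : ℕ, ((Chebyshev.T ℝ (m+1)).natDegree = m+1 ∧
      (Chebyshev.T ℝ (m+1)).leadingCoeff = 2^m) ∧
      ((Chebyshev.T ℝ (m+2)).natDegree = m+2 ∧
      (Chebyshev.T ℝ (m+2)).leadingCoeff = 2^(m+1)) := by
    intro m
    induction m with
    | zero =>
      constructor
      · simp [Chebyshev.T_one]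
      · have h2 : Chebyshev.T ℝ (0+2) = 2 * X^2 - 1 := by
          simpa using Chebyshev.T_two ℝ
        norm_num at h2 ⊢
    | succ m ih =>
      refine ⟨ih.2, ?_⟩
      have hrec : Chebyshev.T ℝ (m+1+2) = 2 * X * Chebyshev.T ℝ (m+1+1) - Chebyshev.T ℝ (m+1) :=
        Chebyshev.T_add_two ℝ (m+1)
      obtain ⟨hqd, hql⟩ := ih.1
      obtain ⟨hpd, hpl⟩ := ih.2
      have hpne : Chebyshev.T ℝ (m+2) ≠ 0 := by
        intro h; rw [h] at hpl; simp at hpl; exact (pow_ne_zero _ (two_ne_zero)) hpl.symm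
      have hqne : Chebyshev.T ℝ (m+1) ≠ 0 := by
        intro h; rw [h] at hql; simp at hql; exact (pow_ne_zero _ (two_ne_zero)) hql.symm
      have h2X : (2 * X : ℝ[X]) ≠ 0 := by
        intro h
        have := congrArg (fun p => Polynomial.coeff p 1) h
        simp at this
      have h2Xd : (2 * X : ℝ[X]).natDegree = 1 := by compute_degree!
      have h2Xl : (2 * X : ℝ[X]).leadingCoeff = 2 := by
        rw [Polynomial.leadingCoeff, h2Xd]; simp
      have hidx : ((m:ℤ)+1+1) = ((m:ℤ)+2) := by ring
      rw [hidx] at hrec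
      have hprodd : (2 * X * Chebyshev.T ℝ (m+2)).natDegree = m + 3 := by
        rw [natDegree_mul h2X hpne, h2Xd, hpd]; ring
      have hprodl : (2 * X * Chebyshev.T ℝ (m+2)).leadingCoeff = 2^(m+2) := by
        rw [leadingCoeff_mul, h2Xl, hpl]; ring
      have hprodne : (2 * X * Chebyshev.T ℝ (m+2)) ≠ 0 := mul_ne_zero h2X hpne
      have hdlt : (Chebyshev.T ℝ (m+1)).degree < (2 * X * Chebyshev.T ℝ (m+2)).degree := by
        rw [degree_eq_natDegree hqne, degree_eq_natDegree hprodne, hqd, hprodd]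
        exact_mod_cast by omega
      have hidx2 : ((m:ℤ)+1+2) = ((m+1:ℕ):ℤ)+2 := by push_cast; ring
      rw [hidx2] at hrec
      rw [hrec]
      constructor
      · rw [natDegree_sub_eq_left_of_natDegree_lt, hprodd]
        rw [hqd, hprodd]; omega
      · rw [leadingCoeff_sub_of_degree_lt hdlt, hprodl]
  intro m; exact (key m).1


lemma cheb_fact17 (n : ℕ) (hn : 1 ≤ n) (y : ℕ → ℝ)
    (hy : ∀ k : ℕ, y k = Real.cos ((2*k - 1)*Real.pi / (2*n))) :
    Chebyshev.T ℝ n = C ((2:ℝ)^(n-1)) * ∏ k ∈ Finset.Icc 1 n, (X - C (y k)) := by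
  obtain ⟨m, rfl⟩ : ∃ m, n = m + 1 := ⟨n - 1, by omega⟩
  have hnn : ((m:ℤ)+1) = ((m+1 : ℕ) : ℤ) := by push_cast; ring
  obtain ⟨hTd, hTl⟩ := cheb_deg17 m
  have hTne : Chebyshev.T ℝ (m+1) ≠ 0 := by
    intro h; rw [h] at hTl; simp at hTl; exact (pow_ne_zero _ (two_ne_zero)) hTl.symm
  have hroot : ∀ k ∈ Finset.Icc 1 (m+1), (Chebyshev.T ℝ (m+1)).eval (y k) = 0 := by
    intro k hk
    rw [hy k, hnn, Chebyshev.T_real_cos]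
    apply Real.cos_eq_zero_iff.2 ⟨(k:ℤ)-1, ?_⟩
    have hne : ((m:ℝ)+1) ≠ 0 := by positivity
    push_cast
    field_simp
    ring
  have hyinj : Set.InjOn y (Finset.Icc 1 (m+1)) := by
    intro i hi j hj hij
    simp only [Finset.coe_Icc, Set.mem_Icc] at hi hj
    simp only [hy] at hij
    push_cast at hij
    have hmem : ∀ k : ℕ, 1 ≤ k → k ≤ m+1 → (2*(k:ℝ) - 1)*π / (2*((m:ℝ)+1)) ∈ Set.Icc 0 π := by
      intro k h1 h2
      have hπ := Real.pi_pos
      constructor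
      · apply div_nonneg
        · have : (1:ℝ) ≤ (k:ℝ) := by exact_mod_cast h1
          nlinarith
        · positivity
      · rw [div_le_iff₀ (by positivity)]
        have : (k:ℝ) ≤ (m:ℝ)+1 := by exact_mod_cast h2
        nlinarith
    have hc := Real.injOn_cos (hmem i hi.1 hi.2) (hmem j hj.1 hj.2) hij
    rw [div_eq_div_iff (by positivity) (by positivity)] at hc
    have h1 := mul_right_cancel₀ (show (2*((m:ℝ)+1)) ≠ 0 by positivity) hc
    have h2 := mul_right_cancel₀ (Real.pi_pos.ne') h1
    have : (i:ℝ) = j := by linarith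
    exact_mod_cast this
  set g : ℝ[X] := C ((2:ℝ)^m) * ∏ k ∈ Finset.Icc 1 (m+1), (X - C (y k)) with hg
  have hprodmonic : (∏ k ∈ Finset.Icc 1 (m+1), (X - C (y k))).Monic :=
    monic_prod_of_monic _ _ (fun k _ => monic_X_sub_C (y k))
  have hprodd : (∏ k ∈ Finset.Icc 1 (m+1), (X - C (y k))).natDegree = m+1 := by
    rw [natDegree_prod_of_monic _ _ (fun k _ => monic_X_sub_C (y k))]
    simp [Nat.card_Icc]
  have hgne : g ≠ 0 := mul_ne_zero (by simp) hprodmonic.ne_zero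
  have hgd : g.natDegree = m+1 := by
    rw [hg, natDegree_C_mul (by positivity), hprodd]
  have hgl : g.leadingCoeff = 2^m := by
    rw [hg, leadingCoeff_mul, leadingCoeff_C, hprodmonic.leadingCoeff, mul_one]
  have card : ((Finset.Icc 1 (m+1)).image y).card = m+1 := by
    rw [Finset.card_image_of_injOn hyinj, Nat.card_Icc]; omega
  have heval : ∀ x ∈ (Finset.Icc 1 (m+1)).image y,
      (Chebyshev.T ℝ (m+1)).eval x = g.eval x := by
    intro x hx
    obtain ⟨k, hk, rfl⟩ := Finset.mem_image.1 hx
    rw [hroot k hk, hg, eval_mul, eval_prod]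
    rw [Finset.prod_eq_zero hk (show eval (y k) (X - C (y k)) = 0 by simp)]
    ring
  have hfinal := Polynomial.eq_of_degree_le_of_eval_finset_eq ((Finset.Icc 1 (m+1)).image y)
    (f := Chebyshev.T ℝ (m+1)) (g := g) ?_ ?_ ?_ heval
  · rw [hnn] at hfinal; exact hfinal
  · rw [degree_eq_natDegree hTne, hTd, card]
  · rw [degree_eq_natDegree hTne, degree_eq_natDegree hgne, hTd, hgd]
  · rw [hTl, hgl]


lemma key_pair17 (a t r c D Tv s yk ωt dp dm : ℝ) (ha : 0 < a) (ha' : a < 1)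
    (ht1 : |t| ≤ 1) (hra : a ≤ r) (hr1 : r ≤ 1) (hc : c ≠ 0)
    (hωt : ωt = c * Tv)
    (hdp : dp = c * D * (4 * r / (1 - a^2)))
    (hdm : dm = c * D * (4 * (-r) / (1 - a^2)))
    (hid : t^2 - r^2 = (1 - a^2)/2 * (s - yk))
    (hT0 : s = yk → Tv = 0) :
    |ωt / (dp * (t - r))| + |ωt / (dm * (t + r))| ≤ (1/a) * |Tv / (D * (s - yk))| := by
  have ha2 : (0:ℝ) < 1 - a^2 := by nlinarith
  have hr0 : 0 < r := lt_of_lt_of_le ha hra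
  rcases eq_or_ne D 0 with hD | hD
  · subst hD
    simp [hdp, hdm]
  rcases eq_or_ne s yk with hs | hs
  · have hTv := hT0 hs
    simp [hωt, hTv]
  -- generic case
  have hM : 0 < |s - yk| := abs_pos.2 (sub_ne_zero.2 hs)
  have htr : t - r ≠ 0 := by
    intro h
    apply hs
    have : t = r := by linarith
    have : t^2 - r^2 = 0 := by rw [this]; ring
    rw [hid] at this
    have := (mul_eq_zero.1 this).resolve_left (by positivity)
    linarith
  have htr' : t + r ≠ 0 := by
    intro h
    apply hs
    have : t = -r := by linarith
    have : t^2 - r^2 = 0 := by rw [this]; ring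
    rw [hid] at this
    have := (mul_eq_zero.1 this).resolve_left (by positivity)
    linarith
  have hP : 0 < |t - r| := abs_pos.2 htr
  have hQ : 0 < |t + r| := abs_pos.2 htr'
  have hDa : 0 < |D| := abs_pos.2 hD
  set A := |Tv| / |D| with hA
  have hA0 : 0 ≤ A := by positivity
  -- compute LHS terms
  have e1 : |ωt / (dp * (t - r))| = A * ((1 - a^2) / (4*r)) * (1 / |t - r|) := by
    rw [hωt, hdp, abs_div, abs_mul, abs_mul, abs_mul]
    rw [show |4 * r / (1 - a^2)| = 4 * r / (1 - a^2) from abs_of_pos (by positivity)]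
    rw [hA]
    field_simp
    rw [abs_mul c D]
    ring
  have e2 : |ωt / (dm * (t + r))| = A * ((1 - a^2) / (4*r)) * (1 / |t + r|) := by
    rw [hωt, hdm, abs_div, abs_mul, abs_mul, abs_mul]
    rw [show |4 * (-r) / (1 - a^2)| = 4 * r / (1 - a^2) by
      rw [abs_div, abs_mul]; simp [abs_of_pos hr0, abs_of_pos ha2]]
    rw [hA]
    field_simp
    rw [abs_mul c D]
    ring
  have hPQ : |t - r| * |t + r| = (1 - a^2)/2 * |s - yk| := by
    rw [← abs_mul, show (t - r) * (t + r) = t^2 - r^2 by ring, hid, abs_mul,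
      abs_of_pos (by positivity : (0:ℝ) < (1 - a^2)/2)]
  have hsum2 : |t - r| + |t + r| ≤ 2 := by
    have h1 : -1 ≤ t := neg_le_of_abs_le ht1
    have h2 : t ≤ 1 := le_of_abs_le ht1
    rcases abs_cases (t - r) with ⟨h3, _⟩ | ⟨h3, _⟩ <;>
      rcases abs_cases (t + r) with ⟨h4, _⟩ | ⟨h4, _⟩ <;> rw [h3, h4] <;> linarith
  have hstep : 1 / |t - r| + 1 / |t + r| ≤ 2 / ((1 - a^2)/2 * |s - yk|) := by
    rw [div_add_div _ _ hP.ne' hQ.ne', hPQ]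
    gcongr
    linarith
  calc |ωt / (dp * (t - r))| + |ωt / (dm * (t + r))|
      = A * ((1 - a^2) / (4*r)) * (1 / |t - r| + 1 / |t + r|) := by rw [e1, e2]; ring
    _ ≤ A * ((1 - a^2) / (4*r)) * (2 / ((1 - a^2)/2 * |s - yk|)) := by
        gcongr
    _ = A / (r * |s - yk|) := by field_simp; try ring
    _ ≤ A / (a * |s - yk|) := by gcongr
    _ = (1/a) * (A / |s - yk|) := by field_simp; try ring
    _ = (1/a) * |Tv / (D * (s - yk))| := by
        rw [abs_div, abs_mul, hA, div_div]


theorem stmt_17 (a : ℝ) (ha : 0 < a) (ha' : a < 1) (n : ℕ) (hn : 1 ≤ n)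
    (E : Set ℝ) (hE : E = Set.Icc (-1 : ℝ) (-a) ∪ Set.Icc a 1)
    (y : ℕ → ℝ) (hy : ∀ k, y k = Real.cos ((2*k - 1)*Real.pi / (2*n)))
    (xp xm : ℕ → ℝ)
    (hxp : ∀ k, xp k = Real.sqrt ((1 - a^2)/2 * y k + (1 + a^2)/2))
    (hxm : ∀ k, xm k = -Real.sqrt ((1 - a^2)/2 * y k + (1 + a^2)/2))
    (ω : ℝ → ℝ)
    (hω : ∀ t, ω t = ∏ k ∈ Finset.Icc 1 n, ((t - xp k) * (t - xm k)))
    (Λn lam : ℝ)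
    (hΛn : Λn = sSup ((fun t => ∑ k ∈ Finset.Icc 1 n,
        |(Polynomial.Chebyshev.T ℝ n).eval t /
          ((Polynomial.derivative (Polynomial.Chebyshev.T ℝ n)).eval (y k) * (t - y k))|)
        '' Set.Icc (-1 : ℝ) 1))
    (hlam : lam = sSup ((fun t => ∑ k ∈ Finset.Icc 1 n,
        (|ω t / (deriv ω (xp k) * (t - xp k))| +
         |ω t / (deriv ω (xm k) * (t - xm k))|)) '' E)) :
    lam ≤ (1/a) * Λn + (1 - a^2)/(8*a^2) := by
  have ha2 : (0:ℝ) < 1 - a^2 := by nlinarith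
  have h2n : ((2:ℝ))^(n-1) ≠ 0 := by positivity
  set D : ℕ → ℝ := fun k => (Polynomial.derivative (Polynomial.Chebyshev.T ℝ n)).eval (y k)
    with hD
  set g : ℝ → ℝ := fun t => ∑ k ∈ Finset.Icc 1 n,
      |(Polynomial.Chebyshev.T ℝ n).eval t / (D k * (t - y k))| with hg
  -- factorization and consequences
  have hfact := cheb_fact17 n hn y hy
  have hTeval : ∀ s : ℝ, (Chebyshev.T ℝ n).eval s
      = 2^(n-1) * ∏ k ∈ Finset.Icc 1 n, (s - y k) := by
    intro s
    rw [hfact]; simp [eval_prod]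
  have hTroot : ∀ k ∈ Finset.Icc 1 n, (Chebyshev.T ℝ n).eval (y k) = 0 := by
    intro k hk
    rw [hTeval, Finset.prod_eq_zero hk (by ring), mul_zero]
  -- basic bounds on nodes
  have hyb : ∀ k, -1 ≤ y k ∧ y k ≤ 1 := by
    intro k; rw [hy k]; exact ⟨Real.neg_one_le_cos _, Real.cos_le_one _⟩
  have hargb : ∀ k, a^2 ≤ (1 - a^2)/2 * y k + (1 + a^2)/2 ∧
      (1 - a^2)/2 * y k + (1 + a^2)/2 ≤ 1 := by
    intro k; obtain ⟨h1, h2⟩ := hyb k; constructor <;> nlinarith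
  have hxp2 : ∀ k, (xp k)^2 = (1 - a^2)/2 * y k + (1 + a^2)/2 := by
    intro k; rw [hxp k, Real.sq_sqrt (le_trans (by positivity) (hargb k).1)]
  have hxpb : ∀ k, a ≤ xp k ∧ xp k ≤ 1 := by
    intro k
    constructor
    · have h := Real.sqrt_le_sqrt (hargb k).1
      rw [Real.sqrt_sq ha.le] at h
      rw [hxp k]; exact h
    · have h := Real.sqrt_le_sqrt (hargb k).2
      rw [Real.sqrt_one] at h
      rw [hxp k]; exact h
  have hxmp : ∀ k, xm k = -xp k := by intro k; rw [hxm k, hxp k]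
  -- the map u and omega identity
  set u : ℝ → ℝ := fun t => (2*t^2 - (1 + a^2))/(1 - a^2) with hu
  set c : ℝ := ((1 - a^2)/2)^n / 2^(n-1) with hc
  have hcne : c ≠ 0 := by rw [hc]; positivity
  have hid : ∀ (t : ℝ) (k : ℕ), t^2 - (xp k)^2 = (1 - a^2)/2 * (u t - y k) := by
    intro t k
    rw [hxp2 k, hu]
    field_simp
    ring
  have huxp : ∀ k, u (xp k) = y k := by
    intro k
    have := hid (xp k) k
    simp only [sub_self] at this
    have h := (mul_eq_zero.1 this.symm).resolve_left (by positivity)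
    linarith
  have hωT : ∀ t, ω t = c * (Chebyshev.T ℝ n).eval (u t) := by
    intro t
    rw [hω t, hTeval (u t), hc]
    have : ∀ k ∈ Finset.Icc 1 n, (t - xp k) * (t - xm k)
        = (1 - a^2)/2 * (u t - y k) := by
      intro k _
      rw [hxmp k, show (t - xp k) * (t - -xp k) = t^2 - (xp k)^2 by ring, hid t k]
    rw [Finset.prod_congr rfl this, Finset.prod_mul_distrib, Finset.prod_const,
      Nat.card_Icc]
    field_simp
    ring_nf
    simp only [show 1 + n - 1 = n by omega]
  have hωfun : ω = fun t => c * (Chebyshev.T ℝ n).eval (u t) := funext hωT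
  have hderiv : ∀ t : ℝ, deriv ω t
      = c * (Polynomial.derivative (Chebyshev.T ℝ n)).eval (u t) * (4*t/(1 - a^2)) := by
    intro t
    have h1 : HasDerivAt (fun t : ℝ => 2*t^2 - (1 + a^2)) (4*t) t := by
      have h0 := ((hasDerivAt_pow 2 t).const_mul (2:ℝ)).sub_const (1 + a^2)
      norm_num at h0
      rw [show (4:ℝ)*t = 2*(2*t) by ring]
      exact h0.sub_const (1 + a^2)
    have hud : HasDerivAt u (4*t/(1 - a^2)) t := h1.div_const (1 - a^2)
    have hT := (Polynomial.hasDerivAt (Chebyshev.T ℝ n) (u t)).comp t hud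
    have hT2 : HasDerivAt (fun t : ℝ => c * (Chebyshev.T ℝ n).eval (u t))
        (c * ((Polynomial.derivative (Chebyshev.T ℝ n)).eval (u t) * (4*t/(1 - a^2)))) t :=
      hT.const_mul c
    rw [hωfun, hT2.deriv]
    ring
  -- bounds for t in E
  have htE : ∀ t ∈ E, a ≤ |t| ∧ |t| ≤ 1 := by
    intro t ht
    rw [hE] at ht
    rcases ht with ⟨h1, h2⟩ | ⟨h1, h2⟩
    · rw [abs_of_nonpos (by linarith)]; constructor <;> linarith
    · rw [abs_of_nonneg (by linarith)]; constructor <;> linarith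
  have huE : ∀ t ∈ E, u t ∈ Set.Icc (-1:ℝ) 1 := by
    intro t ht
    obtain ⟨h1, h2⟩ := htE t ht
    have ht2 : a^2 ≤ t^2 ∧ t^2 ≤ 1 := by
      rw [← sq_abs t]; constructor <;> nlinarith
    rw [hu, Set.mem_Icc]
    constructor
    · rw [le_div_iff₀ ha2]; nlinarith [ht2.1]
    · rw [div_le_one ha2]; nlinarith [ht2.2]
  -- boundedness of the Chebyshev sum
  have hgb : ∀ s ∈ Set.Icc (-1:ℝ) 1, g s ≤ ∑ k ∈ Finset.Icc 1 n, 2^(n-1)*2^n/|D k| := by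
    intro s hs
    apply Finset.sum_le_sum
    intro k hk
    rcases eq_or_ne (D k) 0 with hDk | hDk
    · simp [hDk]
    rcases eq_or_ne s (y k) with hsy | hsy
    · rw [hsy, sub_self, mul_zero, div_zero, abs_zero]
      positivity
    have hprod : (Chebyshev.T ℝ n).eval s
        = (s - y k) * (2^(n-1) * ∏ j ∈ (Finset.Icc 1 n).erase k, (s - y j)) := by
      rw [hTeval, ← Finset.mul_prod_erase _ _ hk]; ring
    have hden : (0:ℝ) < |D k| * |s - y k| :=
      mul_pos (abs_pos.2 hDk) (abs_pos.2 (sub_ne_zero.2 hsy))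
    have e : |(Chebyshev.T ℝ n).eval s / (D k * (s - y k))|
        = (|s - y k| * |2^(n-1) * ∏ j ∈ (Finset.Icc 1 n).erase k, (s - y j)|)
          / (|D k| * |s - y k|) := by
      rw [hprod, abs_div, abs_mul (s - y k), abs_mul (D k)]
    rw [e, div_le_div_iff₀ hden (abs_pos.2 hDk)]
    have h1 : |2^(n-1) * ∏ j ∈ (Finset.Icc 1 n).erase k, (s - y j)| ≤ 2^(n-1)*2^n := by
      rw [abs_mul, abs_pow, abs_two]
      apply mul_le_mul_of_nonneg_left _ (by positivity)
      calc |∏ j ∈ (Finset.Icc 1 n).erase k, (s - y j)|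
          = ∏ j ∈ (Finset.Icc 1 n).erase k, |s - y j| := by rw [Finset.abs_prod]
        _ ≤ ∏ j ∈ (Finset.Icc 1 n).erase k, 2 := by
            apply Finset.prod_le_prod (fun _ _ => abs_nonneg _)
            intro j _
            obtain ⟨hy1, hy2⟩ := hyb j
            obtain ⟨hs1, hs2⟩ := hs
            rw [abs_le]; constructor <;> linarith
        _ = 2^((Finset.Icc 1 n).erase k).card := by rw [Finset.prod_const]
        _ ≤ 2^n := by
            apply pow_le_pow_right₀ (by norm_num)
            calc ((Finset.Icc 1 n).erase k).card ≤ (Finset.Icc 1 n).card :=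
                Finset.card_le_card (Finset.erase_subset _ _)
              _ = n := by rw [Nat.card_Icc]; omega
    have h2 := mul_le_mul_of_nonneg_left h1
      (mul_nonneg (abs_nonneg (s - y k)) (abs_nonneg (D k)))
    nlinarith [h2]
  set B : ℝ := ∑ k ∈ Finset.Icc 1 n, 2^(n-1)*2^n/|D k| with hB
  have hbdd : BddAbove (g '' Set.Icc (-1:ℝ) 1) := by
    refine ⟨B, ?_⟩
    rintro v ⟨s, hs, rfl⟩
    exact hgb s hs
  have hΛnge : ∀ s ∈ Set.Icc (-1:ℝ) 1, g s ≤ Λn := by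
    intro s hs
    rw [hΛn]
    exact le_csSup hbdd ⟨s, hs, rfl⟩
  have hΛn0 : 0 ≤ Λn := by
    have h1 : g 1 ≤ Λn := hΛnge 1 (by norm_num)
    have h0 : 0 ≤ g 1 := Finset.sum_nonneg (fun k _ => abs_nonneg _)
    linarith
  have hextra : 0 ≤ (1 - a^2)/(8*a^2) := by positivity
  -- main bound
  rw [hlam]
  apply Real.sSup_le
  · rintro v ⟨t, ht, rfl⟩
    obtain ⟨hta, ht1⟩ := htE t ht
    have hkey : ∀ k ∈ Finset.Icc 1 n,
        |ω t / (deriv ω (xp k) * (t - xp k))| + |ω t / (deriv ω (xm k) * (t - xm k))|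
        ≤ (1/a) * |(Chebyshev.T ℝ n).eval (u t) / (D k * (u t - y k))| := by
      intro k hk
      obtain ⟨hra, hr1⟩ := hxpb k
      have hdxp : deriv ω (xp k) = c * D k * (4 * xp k / (1 - a^2)) := by
        rw [hderiv (xp k), huxp k]
      have hdxm : deriv ω (xm k) = c * D k * (4 * (-(xp k)) / (1 - a^2)) := by
        rw [hderiv (xm k), hxmp k]
        have huxm : u (-xp k) = y k := by
          rw [← huxp k, hu]; norm_num
        rw [huxm]
      have ht0 : u t = y k → (Chebyshev.T ℝ n).eval (u t) = 0 := by
        intro h; rw [h]; exact hTroot k hk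
      have := key_pair17 a t (xp k) c (D k) ((Chebyshev.T ℝ n).eval (u t)) (u t) (y k)
        (ω t) (deriv ω (xp k)) (deriv ω (xm k)) ha ha' ht1 hra hr1 hcne
        (hωT t) hdxp hdxm (hid t k) ht0
      rw [show t - xm k = t + xp k by rw [hxmp k]; ring]
      exact this
    calc (∑ k ∈ Finset.Icc 1 n,
          (|ω t / (deriv ω (xp k) * (t - xp k))| + |ω t / (deriv ω (xm k) * (t - xm k))|))
        ≤ ∑ k ∈ Finset.Icc 1 n,
          (1/a) * |(Chebyshev.T ℝ n).eval (u t) / (D k * (u t - y k))| :=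
          Finset.sum_le_sum hkey
      _ = (1/a) * g (u t) := by rw [hg, Finset.mul_sum]
      _ ≤ (1/a) * Λn := by
          apply mul_le_mul_of_nonneg_left (hΛnge (u t) (huE t ht)) (by positivity)
      _ ≤ (1/a) * Λn + (1 - a^2)/(8*a^2) := by linarith
  · positivity
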